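/- For binary classifiers g with values in {−1,+1} and a symmetric hypothesis space H (closed under negation g ↦ −g), the equal opportunity distance in the target domain satisfies Δ_{EOp,T}(g) ≤ Δ_{EOp,S}(g) + (1/2) d_{HΔH}(D_{T_0^{-1}}, D_{S_0^{-1}}) + (1/2) d_{HΔH}(D_{T_1^{-1}}, D_{S_1^{-1}}) + λ_0^{-1} + λ_1^{-1}, where λ_α^{-1} = ε_{S_α^{-1}}(g*, f) + ε_{T_α^{-1}}(g*, f) for any fixed g* ∈ H. -/

import Mathlib

open MeasureTheory

/-- Disagreement error for ±1-valued functions: `ε_D(h,h') = E_{z∼D}[|h z − h' z|/2]`. -/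
noncomputable def errH {Z : Type*} [MeasurableSpace Z] (μ : Measure Z) (h h' : Z → ℝ) : ℝ :=
  ∫ z, |h z - h' z| / 2 ∂μ

/-- `d_{HΔH}(D,D') = 2 sup_{h,h'∈H} |Pr_D[h≠h'] − Pr_{D'}[h≠h']|`. -/
noncomputable def dHH {Z : Type*} [MeasurableSpace Z] (H : Set (Z → ℝ))
    (μ ν : Measure Z) : ℝ :=
  2 * ⨆ p : H × H,
    |(μ {z | p.1.1 z ≠ p.2.1 z}).toReal - (ν {z | p.1.1 z ≠ p.2.1 z}).toReal|

/-- Equal opportunity distance in the ±1 label setting. -/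
noncomputable def eopDiffPM {Z : Type*} [MeasurableSpace Z] (μ0 μ1 : Measure Z)
    (g : Z → ℝ) : ℝ :=
  |(∫ z, (1 + g z) / 2 ∂μ0) - ∫ z, (1 + g z) / 2 ∂μ1|

private lemma intble_aux {Z : Type*} [MeasurableSpace Z] (μ : Measure Z) [IsFiniteMeasure μ]
    (u : Z → ℝ) (hm : Measurable u) (hb : ∀ z, |u z| ≤ 2) : Integrable u μ := by
  refine (integrable_const (2:ℝ)).mono' hm.aestronglyMeasurable ?_
  exact ae_of_all _ fun z => by simpa using hb z

/-- `errH μ g gs` equals the probability of disagreement. -/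
private lemma errH_eq_meas {Z : Type*} [MeasurableSpace Z] (μ : Measure Z)
    (g gs : Z → ℝ) (hbg : ∀ z, g z = -1 ∨ g z = 1) (hbgs : ∀ z, gs z = -1 ∨ gs z = 1)
    (hmg : Measurable g) (hmgs : Measurable gs) :
    errH μ g gs = (μ {z | g z ≠ gs z}).toReal := by
  have hS : MeasurableSet {z | g z ≠ gs z} := (measurableSet_eq_fun hmg hmgs).compl
  have heq : (fun z => |g z - gs z| / 2)
      = Set.indicator {z | g z ≠ gs z} (fun _ => (1:ℝ)) := by
    funext z
    by_cases h : g z = gs z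
    · simp [Set.indicator_of_notMem, h]
    · rw [Set.indicator_of_mem (by exact h)]
      rcases hbg z with h1 | h1 <;> rcases hbgs z with h2 | h2 <;>
        simp [h1, h2] at h ⊢ <;> norm_num
  rw [errH, heq, integral_indicator_const (1:ℝ) hS]
  simp [Measure.real]

/-- Deviation lemma: `|∫ (1+g)/2 dμ − μ{g≠gs}| ≤ errH μ gs f`. -/
private lemma dev_aux {Z : Type*} [MeasurableSpace Z] (μ : Measure Z) [IsProbabilityMeasure μ]
    (f g gs : Z → ℝ) (hf : f =ᵐ[μ] fun _ => -1)
    (hbg : ∀ z, g z = -1 ∨ g z = 1) (hbgs : ∀ z, gs z = -1 ∨ gs z = 1)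
    (hmg : Measurable g) (hmgs : Measurable gs) :
    |(∫ z, (1 + g z) / 2 ∂μ) - (μ {z | g z ≠ gs z}).toReal| ≤ errH μ gs f := by
  have hB : errH μ gs f = ∫ z, |gs z + 1| / 2 ∂μ := by
    refine integral_congr_ae ?_
    filter_upwards [hf] with z hz
    rw [hz]; ring_nf
  have hA : (∫ z, (1 + g z) / 2 ∂μ) = ∫ z, |g z + 1| / 2 ∂μ := by
    refine integral_congr_ae (ae_of_all _ fun z => ?_)
    rcases hbg z with h | h <;> simp [h] <;> norm_num
  have hC : (μ {z | g z ≠ gs z}).toReal = ∫ z, |g z - gs z| / 2 ∂μ :=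
    (errH_eq_meas μ g gs hbg hbgs hmg hmgs).symm
  rw [hA, hB, hC]
  have iu : Integrable (fun z => |g z + 1| / 2) μ := by
    refine intble_aux μ _ (((hmg.add measurable_const).abs).div_const 2) fun z => ?_
    rcases hbg z with h | h <;> simp [h] <;> norm_num
  have iv : Integrable (fun z => |g z - gs z| / 2) μ := by
    refine intble_aux μ _ (((hmg.sub hmgs).abs).div_const 2) fun z => ?_
    rcases hbg z with h | h <;> rcases hbgs z with h2 | h2 <;> simp [h, h2] <;> norm_num
  have iw : Integrable (fun z => |gs z + 1| / 2) μ := by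
    refine intble_aux μ _ (((hmgs.add measurable_const).abs).div_const 2) fun z => ?_
    rcases hbgs z with h | h <;> simp [h] <;> norm_num
  rw [← integral_sub iu iv]
  calc |∫ z, (|g z + 1| / 2 - |g z - gs z| / 2) ∂μ|
      ≤ ∫ z, |(|g z + 1| / 2 - |g z - gs z| / 2)| ∂μ := by
        simpa [Real.norm_eq_abs] using
          norm_integral_le_integral_norm (fun z => |g z + 1| / 2 - |g z - gs z| / 2) (μ := μ)
    _ ≤ ∫ z, |gs z + 1| / 2 ∂μ := by
        refine integral_mono (iu.sub iv).abs iw fun z => ?_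
        have h1 : |(|g z + 1| - |g z - gs z|)| ≤ |gs z + 1| := by
          have h2 := abs_abs_sub_abs_le_abs_sub (g z + 1) (g z - gs z)
          have h3 : (g z + 1) - (g z - gs z) = gs z + 1 := by ring
          rwa [h3] at h2
        have h4 : |(|g z + 1| / 2 - |g z - gs z| / 2)| = |(|g z + 1| - |g z - gs z|)| / 2 := by
          rw [show |g z + 1| / 2 - |g z - gs z| / 2 = (|g z + 1| - |g z - gs z|) / 2 by ring,
            abs_div, abs_of_nonneg (by norm_num : (0:ℝ) ≤ 2)]
        rw [h4]; linarith

theorem stmt7 {Z : Type*} [MeasurableSpace Z] (H : Set (Z → ℝ))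
    (hbin : ∀ h ∈ H, ∀ z, h z = -1 ∨ h z = 1)
    (hmeas : ∀ h ∈ H, Measurable h)
    (hsym : ∀ h ∈ H, (fun z => -h z) ∈ H)
    (μS0 μS1 μT0 μT1 : Measure Z)
    [IsProbabilityMeasure μS0] [IsProbabilityMeasure μS1]
    [IsProbabilityMeasure μT0] [IsProbabilityMeasure μT1]
    (f : Z → ℝ)
    (hfS0 : f =ᵐ[μS0] fun _ => -1) (hfS1 : f =ᵐ[μS1] fun _ => -1)
    (hfT0 : f =ᵐ[μT0] fun _ => -1) (hfT1 : f =ᵐ[μT1] fun _ => -1)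
    (g : Z → ℝ) (hg : g ∈ H) (gs : Z → ℝ) (hgs : gs ∈ H) :
    eopDiffPM μT0 μT1 g ≤
      eopDiffPM μS0 μS1 g + (1 / 2) * dHH H μT0 μS0 + (1 / 2) * dHH H μT1 μS1
        + (errH μS0 gs f + errH μT0 gs f) + (errH μS1 gs f + errH μT1 gs f) := by
  classical
  set S : Set Z := {z | g z ≠ gs z} with hSdef
  have hbg := hbin g hg
  have hbgs := hbin gs hgs
  have hmg := hmeas g hg
  have hmgs := hmeas gs hgs
  -- dHH bound
  have hsup : ∀ (μ ν : Measure Z), IsProbabilityMeasure μ → IsProbabilityMeasure ν →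
      |(μ S).toReal - (ν S).toReal| ≤ (1 / 2) * dHH H μ ν := by
    intro μ ν hμ hν
    rw [dHH]
    have hbdd : BddAbove (Set.range fun p : H × H =>
        |(μ {z | p.1.1 z ≠ p.2.1 z}).toReal - (ν {z | p.1.1 z ≠ p.2.1 z}).toReal|) := by
      refine ⟨1, ?_⟩
      rintro x ⟨p, rfl⟩
      have h1 : (μ {z | p.1.1 z ≠ p.2.1 z}).toReal ≤ 1 :=
        ENNReal.toReal_le_of_le_ofReal zero_le_one (by simpa using prob_le_one)
      have h2 : (ν {z | p.1.1 z ≠ p.2.1 z}).toReal ≤ 1 :=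
        ENNReal.toReal_le_of_le_ofReal zero_le_one (by simpa using prob_le_one)
      have h3 : (0:ℝ) ≤ (μ {z | p.1.1 z ≠ p.2.1 z}).toReal := ENNReal.toReal_nonneg
      have h4 : (0:ℝ) ≤ (ν {z | p.1.1 z ≠ p.2.1 z}).toReal := ENNReal.toReal_nonneg
      rw [abs_sub_le_iff]; constructor <;> linarith
    have hle := le_ciSup hbdd (⟨⟨g, hg⟩, ⟨gs, hgs⟩⟩ : H × H)
    simp only at hle
    linarith
  -- deviation bounds
  have dT0 := dev_aux μT0 f g gs hfT0 hbg hbgs hmg hmgs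
  have dS0 := dev_aux μS0 f g gs hfS0 hbg hbgs hmg hmgs
  have dT1 := dev_aux μT1 f g gs hfT1 hbg hbgs hmg hmgs
  have dS1 := dev_aux μS1 f g gs hfS1 hbg hbgs hmg hmgs
  have h0 := hsup μT0 μS0 inferInstance inferInstance
  have h1 := hsup μT1 μS1 inferInstance inferInstance
  rw [eopDiffPM, eopDiffPM]
  set AT0 := ∫ z, (1 + g z) / 2 ∂μT0
  set AT1 := ∫ z, (1 + g z) / 2 ∂μT1
  set AS0 := ∫ z, (1 + g z) / 2 ∂μS0
  set AS1 := ∫ z, (1 + g z) / 2 ∂μS1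
  set CT0 := (μT0 S).toReal
  set CT1 := (μT1 S).toReal
  set CS0 := (μS0 S).toReal
  set CS1 := (μS1 S).toReal
  have key : |AT0 - AT1| ≤ |AS0 - AS1| + (|AT0 - CT0| + |CT0 - CS0| + |CS0 - AS0|)
      + (|AT1 - CT1| + |CT1 - CS1| + |CS1 - AS1|) := by
    have e0 : AT0 - AT1 = (AS0 - AS1) + ((AT0 - CT0) + (CT0 - CS0) + (CS0 - AS0))
        - ((AT1 - CT1) + (CT1 - CS1) + (CS1 - AS1)) := by ring
    rw [e0]
    calc _ ≤ |(AS0 - AS1) + ((AT0 - CT0) + (CT0 - CS0) + (CS0 - AS0))| +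
          |((AT1 - CT1) + (CT1 - CS1) + (CS1 - AS1))| := abs_sub _ _
      _ ≤ _ := by
          have := abs_add_le (AS0 - AS1) ((AT0 - CT0) + (CT0 - CS0) + (CS0 - AS0))
          have h5 := abs_add_le (AT0 - CT0) (CT0 - CS0)
          have h6 := abs_add_le ((AT0 - CT0) + (CT0 - CS0)) (CS0 - AS0)
          have h7 := abs_add_le (AT1 - CT1) (CT1 - CS1)
          have h8 := abs_add_le ((AT1 - CT1) + (CT1 - CS1)) (CS1 - AS1)
          linarith
  have hCS0 : |CS0 - AS0| ≤ errH μS0 gs f := by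
    rw [abs_sub_comm]; exact dS0
  have hCS1 : |CS1 - AS1| ≤ errH μS1 gs f := by
    rw [abs_sub_comm]; exact dS1
  linarith
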